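/- arXiv:2512.05205 — 2 statements merged into one kernel-verified Lean document; each statement's English description precedes it below -/
import Mathlib

section
/- (Soundness of the constrained sampling procedure.) Let n be a positive integer, (w, C) ∈ ℤ^n × ℤ a linear constraint with w^T x^w ≤ C, and y ∈ {0,1}^n. Suppose that for every index i ∈ {1,...,n} with y_i ≠ x^w_i, the budget check holds: |w_i| ≤ (C − w^T x^w) − Σ_{k < i, y_k ≠ x^w_k} |w_k|. Then w^T y ≤ C. -/
open Finset

/-- A bit string of length `n`, encoded as an integer vector with entries in `{0,1}`. -/
def IsBitString {n : ℕ} (x : Fin n → ℤ) : Prop := ∀ i, x i = 0 ∨ x i = 1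

/-- The bit string `x^w` minimizing the linear form: `x^w_i = 0` if `w_i ≥ 0`, else `1`. -/
def xw {n : ℕ} (w : Fin n → ℤ) : Fin n → ℤ := fun i => if 0 ≤ w i then 0 else 1

/-- The linear form `w^T x = Σ_k w_k x_k`. -/
def dotP {n : ℕ} (w x : Fin n → ℤ) : ℤ := ∑ k, w k * x k

/-- The prefix relaxation `P_i^w(x) = Σ_{k=1}^i w_k x_k + Σ_{k=i+1}^n w_k x^w_k`
(indices of `Fin n` are 0-based, so `k ∈ {1,…,i}` corresponds to `(k : ℕ) < i`). -/
def prefixRelax {n : ℕ} (w x : Fin n → ℤ) (i : ℕ) : ℤ :=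
  ∑ k ∈ Finset.univ.filter (fun k : Fin n => (k : ℕ) < i), w k * x k +
  ∑ k ∈ Finset.univ.filter (fun k : Fin n => i ≤ (k : ℕ)), w k * xw w k

/-- Soundness of the constrained sampling procedure: if
`w^T x^w ≤ C` and at every index where `y` flips away from `x^w` the budget
check `|w_i| ≤ (C - w^T x^w) - Σ_{k < i, y_k ≠ x^w_k} |w_k|` holds, then
`w^T y ≤ C`. -/
theorem sampling_sound (n : ℕ) (hn : 0 < n) (w : Fin n → ℤ) (C : ℤ)
    (hroot : dotP w (xw w) ≤ C)
    (y : Fin n → ℤ) (hy : IsBitString y)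
    (hcheck : ∀ i : Fin n, y i ≠ xw w i →
      |w i| ≤ (C - dotP w (xw w)) -
        ∑ k ∈ Finset.univ.filter (fun k : Fin n => k < i ∧ y k ≠ xw w k), |w k|) :
    dotP w y ≤ C := by
  set S : Finset (Fin n) := Finset.univ.filter (fun k => y k ≠ xw w k) with hS
  have key : dotP w y = dotP w (xw w) + ∑ k ∈ S, |w k| := by
    have : ∑ k ∈ S, |w k| = ∑ k : Fin n, (if y k ≠ xw w k then |w k| else 0) := by
      rw [hS, Finset.sum_filter]
    rw [this, dotP, dotP, ← Finset.sum_add_distrib]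
    apply Finset.sum_congr rfl
    intro k _
    rcases hy k with h0 | h1
    · by_cases hw : 0 ≤ w k
      · simp [xw, hw, h0]
      · have : y k ≠ xw w k := by simp [xw, hw, h0]
        simp only [xw, if_neg hw, this, if_pos, h0]
        rw [if_pos (by norm_num), abs_of_neg (lt_of_not_ge hw)]; ring
    · by_cases hw : 0 ≤ w k
      · have : y k ≠ xw w k := by simp [xw, hw, h1]
        simp only [xw, if_pos hw, this, if_pos, h1]
        rw [if_pos (by norm_num), abs_of_nonneg hw]; ring
      · simp [xw, hw, h1]
  rw [key]
  rcases S.eq_empty_or_nonempty with hSe | hSne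
  · simp [hSe]; linarith
  · set m := S.max' hSne with hm
    have hmS : m ∈ S := S.max'_mem hSne
    have hflip : y m ≠ xw w m := by
      have := hmS; rw [hS, Finset.mem_filter] at this; exact this.2
    have hfilt : Finset.univ.filter (fun k : Fin n => k < m ∧ y k ≠ xw w k)
        = S.erase m := by
      ext k
      simp only [Finset.mem_filter, Finset.mem_erase, Finset.mem_univ, true_and, hS]
      constructor
      · rintro ⟨hk, hf⟩; exact ⟨ne_of_lt hk, hf⟩
      · rintro ⟨hne, hf⟩
        refine ⟨lt_of_le_of_ne ?_ hne, hf⟩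
        exact S.le_max' k (by rw [hS]; simp [hf])
    have hck := hcheck m hflip
    rw [hfilt] at hck
    have hsum : ∑ k ∈ S, |w k| = |w m| + ∑ k ∈ S.erase m, |w k| :=
      (Finset.add_sum_erase S _ hmS).symm
    linarith
end

section
/- (Completeness of the constrained sampling procedure.) Let n be a positive integer, (w, C) ∈ ℤ^n × ℤ a linear constraint, and y ∈ {0,1}^n with w^T y ≤ C. Then for every index i ∈ {1,...,n} with y_i ≠ x^w_i, the budget check holds: |w_i| ≤ (C − w^T x^w) − Σ_{k < i, y_k ≠ x^w_k} |w_k|. In particular, every feasible bit string passes all branching checks of the sampling procedure. -/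
open Finset

/-- Completeness of the constrained sampling procedure: if
`w^T y ≤ C`, then at every index where `y` flips away from `x^w` the budget
check `|w_i| ≤ (C - w^T x^w) - Σ_{k < i, y_k ≠ x^w_k} |w_k|` holds; i.e.
every feasible bit string passes all branching checks. -/
theorem sampling_complete (n : ℕ) (hn : 0 < n) (w : Fin n → ℤ) (C : ℤ)
    (y : Fin n → ℤ) (hy : IsBitString y) (hfeas : dotP w y ≤ C) :
    ∀ i : Fin n, y i ≠ xw w i →
      |w i| ≤ (C - dotP w (xw w)) -
        ∑ k ∈ Finset.univ.filter (fun k : Fin n => k < i ∧ y k ≠ xw w k), |w k| := by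
  intro i hi
  -- total sum over all flipped indices
  have hterm : ∀ k : Fin n, w k * y k - w k * xw w k =
      if y k ≠ xw w k then |w k| else 0 := by
    intro k
    by_cases h : y k = xw w k
    · simp [h]
    · simp only [h, if_pos, ne_eq, not_false_iff, if_true]
      unfold xw at h ⊢
      rcases hy k with h0 | h1
      · by_cases hw : 0 ≤ w k
        · simp [hw, h0] at h
        · simp only [hw, if_neg, if_false]
          rw [abs_of_neg (lt_of_not_ge hw)]; ring_nf; rw [h0]; ring
      · by_cases hw : 0 ≤ w k
        · simp only [hw, if_true]
          rw [abs_of_nonneg hw, h1]; ring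
        · simp [h1, hw] at h
  have htotal : ∑ k ∈ Finset.univ.filter (fun k : Fin n => y k ≠ xw w k), |w k|
      = dotP w y - dotP w (xw w) := by
    rw [dotP, dotP, ← Finset.sum_sub_distrib]
    rw [Finset.sum_congr rfl (fun k _ => hterm k)]
    rw [Finset.sum_ite, Finset.sum_const_zero, add_zero]
  have hsubset : insert i (Finset.univ.filter (fun k : Fin n => k < i ∧ y k ≠ xw w k))
      ⊆ Finset.univ.filter (fun k : Fin n => y k ≠ xw w k) := by
    intro k hk
    simp only [Finset.mem_insert, Finset.mem_filter, Finset.mem_univ, true_and] at hk ⊢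
    rcases hk with rfl | ⟨_, h⟩
    · exact hi
    · exact h
  have hnotmem : i ∉ Finset.univ.filter (fun k : Fin n => k < i ∧ y k ≠ xw w k) := by
    simp
  have hle : |w i| + ∑ k ∈ Finset.univ.filter (fun k : Fin n => k < i ∧ y k ≠ xw w k), |w k|
      ≤ ∑ k ∈ Finset.univ.filter (fun k : Fin n => y k ≠ xw w k), |w k| := by
    rw [← Finset.sum_insert (f := fun k => |w k|) hnotmem]
    exact Finset.sum_le_sum_of_subset_of_nonneg hsubset (fun k _ _ => abs_nonneg _)
  linarith [htotal ▸ hle]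
end
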